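/- With the rounding function ⌊·⌉_t on Z_q as above, the probability over uniform u, v ∈ Z_q that ⌊u⌉_t = ⌊u+v⌉_t equals 1 − ((t−1)⌊q/t⌋/q · (q−⌊q/t⌋)/q + |I_{t−1}|/q · (q−|I_{t−1}|)/q). -/
import Mathlib


/-- The rounding function `⌊·⌉_t : ℤ/q → {0,…,t−1}`: the value `a` with canonical
representative `a.val ∈ {0,…,q−1}` lands in interval
`I_j = {j⌊q/t⌋, …, j⌊q/t⌋+⌊q/t⌋−1}` for `j ≤ t−2`, and `I_{t−1} = {(t−1)⌊q/t⌋,…,q−1}`. -/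
def roundT (q t : ℕ) (a : ZMod q) : ℕ := min (a.val / (q / t)) (t - 1)
lemma card_val (q : ℕ) [NeZero q] (p : ℕ → Prop) [DecidablePred p] :
    (Finset.univ.filter (fun a : ZMod q => p a.val)).card
      = ((Finset.range q).filter p).card := by
  apply Finset.card_nbij (fun a => a.val)
  · intro a ha
    simp [ZMod.val_lt, (Finset.mem_filter.mp ha).2]
  · intro a _ b _ h
    exact ZMod.val_injective q h
  · intro i hi
    simp only [Finset.coe_filter, Set.mem_setOf_eq, Finset.mem_range, Finset.mem_coe,
      Finset.mem_univ, true_and, Set.mem_image] at *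
    exact ⟨(i : ZMod q), by rw [ZMod.val_natCast_of_lt hi.1]; exact hi.2,
      by rw [ZMod.val_natCast_of_lt hi.1]⟩

lemma fiber (q t : ℕ) [NeZero q] (ht : 0 < t) (htq : t ^ 2 ≤ q) (j : ℕ) (hj : j < t) :
    (Finset.univ.filter (fun a : ZMod q => roundT q t a = j)).card
      = if j = t - 1 then q - (t - 1) * (q / t) else q / t := by
  have hm : 0 < q / t := Nat.div_pos (le_trans (by nlinarith) htq) ht
  have hmt : t * (q / t) ≤ q := Nat.mul_div_le q t
  unfold roundT
  rw [card_val q (fun n => min (n / (q / t)) (t - 1) = j)]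
  by_cases hje : j = t - 1
  · subst hje
    have : (Finset.range q).filter (fun n => min (n / (q / t)) (t - 1) = t - 1)
        = Finset.Ico ((t - 1) * (q / t)) q := by
      ext n
      simp only [Finset.mem_filter, Finset.mem_range, Finset.mem_Ico]
      constructor
      · rintro ⟨hn, h⟩
        refine ⟨?_, hn⟩
        have h2 : t - 1 ≤ n / (q / t) := by
          have := min_le_left (n / (q / t)) (t - 1); omega
        calc (t - 1) * (q / t) ≤ (n / (q / t)) * (q / t) := Nat.mul_le_mul_right _ h2
          _ ≤ n := Nat.div_mul_le_self n _
      · rintro ⟨h1, h2⟩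
        refine ⟨h2, ?_⟩
        have : t - 1 ≤ n / (q / t) := (Nat.le_div_iff_mul_le hm).mpr h1
        omega
    rw [this, Nat.card_Ico, if_pos rfl]
  · simp only [hje, if_false]
    have hjlt : j < t - 1 := by omega
    have hjm : j * (q / t) + q / t ≤ q := by
      have : (j + 1) * (q / t) ≤ t * (q / t) := Nat.mul_le_mul_right _ (by omega)
      calc j * (q / t) + q / t = (j + 1) * (q / t) := by ring
        _ ≤ t * (q / t) := this
        _ ≤ q := hmt
    have : (Finset.range q).filter (fun n => min (n / (q / t)) (t - 1) = j)
        = Finset.Ico (j * (q / t)) (j * (q / t) + q / t) := by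
      ext n
      simp only [Finset.mem_filter, Finset.mem_range, Finset.mem_Ico]
      constructor
      · rintro ⟨hn, h⟩
        have hd : n / (q / t) = j := by
          rcases le_or_gt (t-1) (n / (q/t)) with h' | h'
          · rw [min_eq_right h'] at h; omega
          · rwa [min_eq_left h'.le] at h
        refine ⟨?_, ?_⟩
        · calc j * (q / t) = (n / (q/t)) * (q/t) := by rw [hd]
            _ ≤ n := Nat.div_mul_le_self n _
        · have h := (Nat.div_lt_iff_lt_mul hm).mp (Nat.lt_succ_of_le (le_of_eq hd))
          calc n < (j).succ * (q/t) := h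
            _ = j * (q/t) + q/t := by rw [Nat.succ_eq_add_one, add_mul, one_mul]
      · rintro ⟨h1, h2⟩
        have hd : n / (q/t) = j :=
          Nat.div_eq_of_lt_le (by linarith [mul_comm j (q/t)])
            (by rw [add_mul, one_mul]; linarith [mul_comm j (q/t)])
        exact ⟨by omega, by rw [hd]; omega⟩
    rw [this, Nat.card_Ico]
    omega

lemma count_pairs (q t : ℕ) [NeZero q] (ht : 0 < t) (htq : t ^ 2 ≤ q) :
    (Finset.univ.filter
        (fun uv : ZMod q × ZMod q => roundT q t uv.1 = roundT q t (uv.1 + uv.2))).card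
      = (t - 1) * (q / t) ^ 2 + (q - (t - 1) * (q / t)) ^ 2 := by
  set m := q / t with hm
  set k := q - (t - 1) * m with hk
  set F : ℕ → ℕ := fun j => if j = t - 1 then k else m with hF
  -- step 1: change of variables (u,v) ↦ (u,u+v)
  have h1 : (Finset.univ.filter
        (fun uv : ZMod q × ZMod q => roundT q t uv.1 = roundT q t (uv.1 + uv.2))).card
      = (Finset.univ.filter
        (fun uw : ZMod q × ZMod q => roundT q t uw.1 = roundT q t uw.2)).card := by
    apply Finset.card_nbij (fun uv => (uv.1, uv.1 + uv.2))
    · intro uv h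
      simp only [Finset.mem_coe, Finset.mem_filter, Finset.mem_univ, true_and] at *
      exact h
    · intro a _ b _ h
      simp only [Prod.mk.injEq] at h
      obtain ⟨h1, h2⟩ := h
      exact Prod.ext h1 (by rw [h1] at h2; exact add_left_cancel h2)
    · intro uw h
      simp only [Finset.coe_filter, Set.mem_setOf_eq, Finset.mem_univ, true_and,
        Set.mem_image, Finset.mem_coe, Finset.mem_filter] at *
      exact ⟨(uw.1, uw.2 - uw.1), by simpa using h, by simp⟩
  rw [h1, Finset.card_filter]
  rw [Fintype.sum_prod_type]
  have h2 : ∀ u : ZMod q, (∑ w : ZMod q,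
      if roundT q t u = roundT q t w then (1:ℕ) else 0) = F (roundT q t u) := by
    intro u
    rw [← Finset.card_filter]
    have : (Finset.univ.filter fun w : ZMod q => roundT q t u = roundT q t w)
        = Finset.univ.filter fun w : ZMod q => roundT q t w = roundT q t u := by
      simp [eq_comm]
    rw [this, fiber q t ht htq _ (by unfold roundT; omega)]
  simp only [h2]
  have h3 : ∑ u : ZMod q, F (roundT q t u)
      = ∑ j ∈ Finset.range t, ∑ u ∈ Finset.univ.filter
          (fun u : ZMod q => roundT q t u = j), F (roundT q t u) := by
    rw [Finset.sum_fiberwise_of_maps_to]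
    intro u _
    simp only [Finset.mem_range]
    unfold roundT; omega
  rw [h3]
  have h4 : ∀ j ∈ Finset.range t, (∑ u ∈ Finset.univ.filter
      (fun u : ZMod q => roundT q t u = j), F (roundT q t u)) = F j * F j := by
    intro j hj
    rw [Finset.sum_congr rfl (fun u hu => by
      rw [(Finset.mem_filter.mp hu).2]), Finset.sum_const, smul_eq_mul,
      fiber q t ht htq j (Finset.mem_range.mp hj)]
  rw [Finset.sum_congr rfl h4]
  -- now sum over range t
  obtain ⟨s, rfl⟩ : ∃ s, t = s + 1 := ⟨t - 1, by omega⟩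
  rw [Finset.sum_range_succ]
  simp only [Nat.add_sub_cancel, hF]
  rw [Finset.sum_congr rfl (fun j hj => by
    rw [if_neg (by have := Finset.mem_range.mp hj; omega)]), Finset.sum_const,
    Finset.card_range, smul_eq_mul]
  simp only [if_true]
  ring

/-- For a prime `q` and `t ≥ 1`, the probability over uniform `u, v ∈ ℤ/q` that
`⌊u⌉_t = ⌊u+v⌉_t` equals
`1 − ((t−1)⌊q/t⌋/q · (q−⌊q/t⌋)/q + |I_{t−1}|/q · (q−|I_{t−1}|)/q)`,
where `|I_{t−1}| = q − (t−1)⌊q/t⌋`. -/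
theorem stmt_6 (q t : ℕ) [Fact q.Prime] (ht : 0 < t) (htq : t ^ 2 ≤ q) :
    ((Finset.univ.filter
        (fun uv : ZMod q × ZMod q => roundT q t uv.1 = roundT q t (uv.1 + uv.2))).card : ℝ)
        / (q : ℝ) ^ 2 =
      1 - ((((t : ℝ) - 1) * (q / t : ℕ) / q) * (((q : ℝ) - (q / t : ℕ)) / q) +
        (((q : ℝ) - ((t : ℝ) - 1) * (q / t : ℕ)) / q) *
          (((q : ℝ) - ((q : ℝ) - ((t : ℝ) - 1) * (q / t : ℕ))) / q)) := by
  have hq : 0 < q := (Fact.out : q.Prime).pos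
  haveI : NeZero q := ⟨hq.ne'⟩
  rw [count_pairs q t ht htq]
  have ht1 : 1 ≤ t := ht
  have hle : (t - 1) * (q / t) ≤ q :=
    le_trans (Nat.mul_le_mul_right _ (by omega)) (Nat.mul_div_le q t)
  have hq0 : (q : ℝ) ≠ 0 := Nat.cast_ne_zero.mpr hq.ne'
  push_cast [hle, ht1]
  field_simp
  ring
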